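/- arXiv:1910.08980 — 6 statements merged into one kernel-verified Lean document; each statement's English description precedes it below -/
import Mathlib

section
/- Let G be a simple graph on vertex set Fin n and let h > 0 be a real number such that for every nonempty subset S ⊆ Fin n with |S| ≤ n/2 one has |∂S| ≥ h·|S|. Let p : (Fin n → Bool) → ℝ be a probability distribution (nonnegative values summing to 1) that is symmetric under bitwise negation, i.e. p(x) = p(x̄) for all x. If the expected cut satisfies Σ_x p(x)·cut_G(x) ≤ (h/6)·n, then p({x : |x| ≤ n/3}) ≥ 1/4. -/
/-- The number of edges of `G` whose endpoints receive different values under the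
Boolean assignment `x` (the "cut" of `x`). -/
def SimpleGraph.cutCard {n : ℕ} (G : SimpleGraph (Fin n)) [DecidableRel G.Adj]
    (x : Fin n → Bool) : ℕ :=
  (G.edgeFinset.filter (fun e => ¬ (Sym2.map x e).IsDiag)).card

/-- The edge boundary of a set `S` of vertices: edges with exactly one endpoint in `S`. -/
def SimpleGraph.bdryCard {n : ℕ} (G : SimpleGraph (Fin n)) [DecidableRel G.Adj]
    (S : Finset (Fin n)) : ℕ :=
  G.cutCard (fun v => decide (v ∈ S))

/-- The Hamming weight of a Boolean string. -/
def hammingWt {n : ℕ} (x : Fin n → Bool) : ℕ :=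
  (Finset.univ.filter (fun j => x j = true)).card

lemma cut_neg {n : ℕ} (G : SimpleGraph (Fin n)) [DecidableRel G.Adj] (x : Fin n → Bool) :
    G.cutCard (fun j => ! x j) = G.cutCard x := by
  unfold SimpleGraph.cutCard
  congr 1
  apply Finset.filter_congr
  intro e _
  induction e using Sym2.ind with
  | _ a b => simp [Sym2.isDiag_iff_proj_eq]

lemma wt_le {n : ℕ} (x : Fin n → Bool) : hammingWt x ≤ n := by
  simpa [hammingWt] using Finset.card_filter_le Finset.univ (fun j => x j = true)

lemma wt_neg {n : ℕ} (x : Fin n → Bool) :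
    hammingWt (fun j => ! x j) = n - hammingWt x := by
  unfold hammingWt
  have hc : Finset.univ.filter (fun j => (fun j => ! x j) j = true)
      = (Finset.univ.filter (fun j => x j = true))ᶜ := by
    ext j; cases hj : x j <;> simp [hj]
  rw [hc, Finset.card_compl, Fintype.card_fin]

lemma cut_support {n : ℕ} (G : SimpleGraph (Fin n)) [DecidableRel G.Adj] (x : Fin n → Bool) :
    G.bdryCard (Finset.univ.filter (fun j => x j = true)) = G.cutCard x := by
  unfold SimpleGraph.bdryCard
  congr 1
  funext v
  cases hv : x v <;> simp [hv]

lemma key {n : ℕ} (G : SimpleGraph (Fin n)) [DecidableRel G.Adj] (h : ℝ) (hh : 0 < h)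
    (hCheeger : ∀ S : Finset (Fin n), S.Nonempty → (S.card : ℝ) ≤ n / 2 →
      h * S.card ≤ (G.bdryCard S : ℝ))
    (x : Fin n → Bool) (h1 : (n : ℝ) / 3 < hammingWt x)
    (h2 : (hammingWt x : ℝ) < (n : ℝ) - (n : ℝ) / 3) :
    h * (n / 3) ≤ (G.cutCard x : ℝ) := by
  have hn0 : (0:ℝ) ≤ (n:ℝ) := Nat.cast_nonneg n
  by_cases hc : (hammingWt x : ℝ) ≤ n / 2
  · set S := Finset.univ.filter (fun j => x j = true) with hS
    have hcard : S.card = hammingWt x := rfl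
    have hne : S.Nonempty := by
      rw [← Finset.card_pos, hcard]
      have : (0:ℝ) < (hammingWt x : ℝ) := lt_of_le_of_lt (by linarith) h1
      exact_mod_cast this
    have := hCheeger S hne (by rw [hcard]; exact hc)
    rw [hcard, cut_support] at this
    nlinarith [this, h1]
  · set y := fun j => ! x j with hy
    have hwy : (hammingWt y : ℝ) = (n : ℝ) - hammingWt x := by
      rw [wt_neg]
      have := wt_le x
      push_cast [Nat.cast_sub this]
      ring
    have hy1 : (n : ℝ) / 3 < hammingWt y := by rw [hwy]; linarith
    have hy2 : (hammingWt y : ℝ) ≤ n / 2 := by rw [hwy]; linarith [not_le.mp hc]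
    set S := Finset.univ.filter (fun j => y j = true) with hS
    have hcard : S.card = hammingWt y := rfl
    have hne : S.Nonempty := by
      rw [← Finset.card_pos, hcard]
      have : (0:ℝ) < (hammingWt y : ℝ) := lt_of_le_of_lt (by linarith) hy1
      exact_mod_cast this
    have := hCheeger S hne (by rw [hcard]; exact hy2)
    rw [hcard, cut_support, hy, cut_neg] at this
    nlinarith [this, hy1]

theorem stmt1 (n : ℕ) (G : SimpleGraph (Fin n)) [DecidableRel G.Adj] (h : ℝ)
    (hh : 0 < h)
    (hCheeger : ∀ S : Finset (Fin n), S.Nonempty → (S.card : ℝ) ≤ n / 2 →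
      h * S.card ≤ (G.bdryCard S : ℝ))
    (p : (Fin n → Bool) → ℝ)
    (hp0 : ∀ x, 0 ≤ p x) (hp1 : ∑ x, p x = 1)
    (hsym : ∀ x, p x = p (fun j => ! x j))
    (hlow : ∑ x, p x * (G.cutCard x : ℝ) ≤ (h / 6) * n) :
    (1 : ℝ) / 4 ≤ ∑ x ∈ Finset.univ.filter (fun x => (hammingWt x : ℝ) ≤ n / 3), p x := by
  classical
  rcases Nat.eq_zero_or_pos n with hn | hn
  · subst hn
    have : Finset.univ.filter (fun x : Fin 0 → Bool => (hammingWt x : ℝ) ≤ (0:ℕ) / 3)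
        = Finset.univ := by
      apply Finset.filter_true_of_mem
      intro x _
      have : hammingWt x ≤ 0 := wt_le x
      simp [Nat.le_zero.mp this]
    rw [this, hp1]; norm_num
  have hwcast : ∀ x : Fin n → Bool, ((hammingWt (fun j => ! x j) : ℝ)) = (n : ℝ) - hammingWt x := by
    intro x
    rw [wt_neg]
    push_cast [Nat.cast_sub (wt_le x)]
    ring
  set Ac : (Fin n → Bool) → Prop := fun x => (hammingWt x : ℝ) ≤ n / 3 with hAc
  set Bc : (Fin n → Bool) → Prop := fun x => (hammingWt (fun j => ! x j) : ℝ) ≤ n / 3 with hBc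
  have hsplit1 := Finset.sum_filter_add_sum_filter_not Finset.univ Ac p
  have hsplit2 := Finset.sum_filter_add_sum_filter_not
    (Finset.univ.filter (fun x => ¬ Ac x)) Bc p
  rw [Finset.filter_filter, Finset.filter_filter] at hsplit2
  -- B implies not A (since n > 0)
  have hBA : ∀ x : Fin n → Bool, Bc x → ¬ Ac x := by
    intro x hB hA
    have hB' : (hammingWt (fun j => ! x j) : ℝ) ≤ n / 3 := hB
    have hA' : (hammingWt x : ℝ) ≤ n / 3 := hA
    rw [hwcast x] at hB'
    have hn' : (0:ℝ) < n := by exact_mod_cast hn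
    linarith
  have hfB : Finset.univ.filter (fun x => ¬ Ac x ∧ Bc x) = Finset.univ.filter Bc := by
    ext x
    simp only [Finset.mem_filter, Finset.mem_univ, true_and]
    exact ⟨fun ⟨_, hb⟩ => hb, fun hb => ⟨hBA x hb, hb⟩⟩
  rw [hfB] at hsplit2
  -- symmetry: p(B) = p(A)
  have hBAeq : ∑ x ∈ Finset.univ.filter Bc, p x = ∑ x ∈ Finset.univ.filter Ac, p x := by
    apply Finset.sum_bij' (i := fun x _ => fun j => ! x j) (j := fun x _ => fun j => ! x j)
    · intro a ha
      simp only [Finset.mem_filter, Finset.mem_univ, true_and] at ha ⊢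
      exact ha
    · intro a ha
      simp only [Finset.mem_filter, Finset.mem_univ, true_and] at ha ⊢
      have he : (fun j => ! ! a j) = a := by funext j; simp
      show (hammingWt (fun j => ! ! a j) : ℝ) ≤ n / 3
      rw [he]; exact ha
    · intro a _; funext j; simp
    · intro a _; funext j; simp
    · intro a _; exact hsym a
  -- Markov on the middle set
  set M := Finset.univ.filter (fun x => ¬ Ac x ∧ ¬ Bc x) with hM
  have hMle : (∑ x ∈ M, p x) * (h * (n / 3)) ≤ (h / 6) * n := by
    calc (∑ x ∈ M, p x) * (h * (n / 3)) = ∑ x ∈ M, p x * (h * (n / 3)) := Finset.sum_mul _ _ _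
    _ ≤ ∑ x ∈ M, p x * (G.cutCard x : ℝ) := by
        apply Finset.sum_le_sum
        intro x hx
        rw [hM, Finset.mem_filter] at hx
        obtain ⟨_, hnA, hnB⟩ := hx
        have hnA' : ¬ (hammingWt x : ℝ) ≤ n / 3 := hnA
        have hnB' : ¬ (hammingWt (fun j => ! x j) : ℝ) ≤ n / 3 := hnB
        rw [hwcast x] at hnB'
        rw [not_le] at hnA' hnB'
        have := key G h hh hCheeger x hnA' (by linarith)
        exact mul_le_mul_of_nonneg_left this (hp0 x)
    _ ≤ ∑ x, p x * (G.cutCard x : ℝ) := by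
        apply Finset.sum_le_sum_of_subset_of_nonneg (Finset.filter_subset _ _)
        intro x _ _
        exact mul_nonneg (hp0 x) (Nat.cast_nonneg _)
    _ ≤ (h / 6) * n := hlow
  have hc : (0:ℝ) < h * (n / 3) := by
    have hn' : (0:ℝ) < n := by exact_mod_cast hn
    positivity
  have hMhalf : ∑ x ∈ M, p x ≤ 1 / 2 := by
    nlinarith [hMle, hc]
  rw [hp1] at hsplit1
  linarith [hsplit1, hsplit2, hBAeq, hMhalf]
end

section
/- Let n be even, let R be a natural number with n ≥ 4R + 2, and let U be a unitary 2^n × 2^n complex matrix indexed by bit strings x : ZMod n → Bool such that: (i) U commutes with the global bit-flip matrix X^{⊗n}; and (ii) for all j, k ∈ ZMod n with cyclic distance dist(j,k) > R, the matrix Uᴴ Z_j U commutes with both Z_k and X_k. Let H_n be the diagonal matrix whose (x,x)-entry is the number of p ∈ ZMod n with x p ≠ x (p+1) (i.e., H_n = (1/2)Σ_{p∈ZMod n}(I − Z_p Z_{p+1})). Then the expectation value ⟨U|+^n⟩, H_n U|+^n⟩⟩ is a real number that is at most n·(2R + 1/2)/(2R + 1). -/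
open Matrix

/-- The single-qubit Pauli-Z operator on qubit `j`: diagonal with entry `(-1)^{x_j}`. -/
noncomputable def ZopC {n : ℕ} [NeZero n] (j : ZMod n) :
    Matrix (ZMod n → Bool) (ZMod n → Bool) ℂ :=
  Matrix.diagonal (fun x => if x j then -1 else 1)

/-- The single-qubit Pauli-X operator on qubit `j`: the permutation matrix flipping bit `j`. -/
noncomputable def XopC {n : ℕ} [NeZero n] (j : ZMod n) :
    Matrix (ZMod n → Bool) (ZMod n → Bool) ℂ :=
  Matrix.of (fun x y => if y = Function.update x j (! x j) then 1 else 0)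

/-- The global bit-flip operator `X^{⊗n}`: the permutation matrix of bitwise negation. -/
noncomputable def XallC (n : ℕ) [NeZero n] : Matrix (ZMod n → Bool) (ZMod n → Bool) ℂ :=
  Matrix.of (fun x y => if y = (fun i => ! x i) then 1 else 0)

/-- The state `|+^n⟩`: all entries equal to `2^{-n/2}`. -/
noncomputable def plusC (n : ℕ) [NeZero n] : (ZMod n → Bool) → ℂ :=
  fun _ => ((1 / Real.sqrt (2 ^ n) : ℝ) : ℂ)

/-- The ring-of-disagrees Hamiltonian `H_n = (1/2) ∑_p (I - Z_p Z_{p+1})`: the diagonal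
matrix whose `(x,x)`-entry is the number of `p` with `x p ≠ x (p+1)`. -/
noncomputable def ringHam (n : ℕ) [NeZero n] : Matrix (ZMod n → Bool) (ZMod n → Bool) ℂ :=
  Matrix.diagonal
    (fun x => ((Finset.univ.filter (fun p : ZMod n => x p ≠ x (p + 1))).card : ℂ))

/-- The cyclic distance between two elements of `ZMod n`. -/
def cyclicDist {n : ℕ} [NeZero n] (j k : ZMod n) : ℕ :=
  min (j - k).val (n - (j - k).val)

section Aux
set_option linter.unusedSectionVars false
set_option linter.unusedVariables false
set_option linter.unreachableTactic false
set_option linter.unusedTactic false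

variable {n : ℕ} [NeZero n]

def flp (S : Finset (ZMod n)) (x : ZMod n → Bool) : ZMod n → Bool :=
  fun i => if i ∈ S then !x i else x i

lemma flp_flp (S : Finset (ZMod n)) (x : ZMod n → Bool) : flp S (flp S x) = x := by
  funext i; simp [flp]; split <;> simp

lemma flp_eq_iff (S : Finset (ZMod n)) {x y : ZMod n → Bool} :
    y = flp S x ↔ x = flp S y := by
  constructor <;> rintro rfl <;> rw [flp_flp]

noncomputable def FS (S : Finset (ZMod n)) : Matrix (ZMod n → Bool) (ZMod n → Bool) ℂ :=
  Matrix.of (fun x y => if y = flp S x then 1 else 0)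

lemma mul_FS (M : Matrix (ZMod n → Bool) (ZMod n → Bool) ℂ) (S : Finset (ZMod n))
    (x y : ZMod n → Bool) : (M * FS S) x y = M x (flp S y) := by
  simp only [Matrix.mul_apply, FS, Matrix.of_apply]
  have : ∀ z : ZMod n → Bool, (M x z * if y = flp S z then 1 else 0)
      = if z = flp S y then M x z else 0 := by
    intro z
    by_cases h : z = flp S y
    · subst h; simp [flp_flp]
    · have h2 : ¬ (y = flp S z) := fun hy => h ((flp_eq_iff S).mp hy)
      simp [h, h2]
  rw [Finset.sum_congr rfl (fun z _ => this z)]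
  simp

lemma FS_mul (M : Matrix (ZMod n → Bool) (ZMod n → Bool) ℂ) (S : Finset (ZMod n))
    (x y : ZMod n → Bool) : (FS S * M) x y = M (flp S x) y := by
  simp [Matrix.mul_apply, FS]

lemma XopC_eq_FS (m : ZMod n) : XopC m = FS {m} := by
  ext x y
  have : Function.update x m (!x m) = flp {m} x := by
    funext i; by_cases h : i = m <;> simp [flp, Function.update, h]
  simp [XopC, FS, this]

lemma XallC_eq_FS : XallC n = FS Finset.univ := by
  ext x y
  have : (fun i => !x i) = flp Finset.univ x := by funext i; simp [flp]
  simp [XallC, FS, this]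

lemma flp_comm (S T : Finset (ZMod n)) (x : ZMod n → Bool) :
    flp S (flp T x) = flp T (flp S x) := by
  funext i; simp only [flp]; split <;> split <;> rfl

lemma flp_insert {m : ZMod n} {S : Finset (ZMod n)} (hm : m ∉ S) (x : ZMod n → Bool) :
    flp (insert m S) x = flp {m} (flp S x) := by
  funext i
  by_cases h1 : i = m
  · subst h1; simp [flp, hm]
  · by_cases h2 : i ∈ S <;> simp [flp, h1, h2]

lemma FS_FS (S : Finset (ZMod n)) : FS S * FS S = 1 := by
  ext x y
  rw [FS_mul]
  simp only [FS, Matrix.of_apply, Matrix.one_apply, flp_eq_iff, flp_flp]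
  by_cases h : x = y <;> simp [h, eq_comm]

lemma FS_compl (S : Finset (ZMod n)) : FS S * FS Sᶜ = XallC n := by
  ext x y
  rw [FS_mul, XallC_eq_FS]
  have : flp Sᶜ (flp S x) = flp Finset.univ x := by
    funext i; by_cases h : i ∈ S <;> simp [flp, h]
  simp [FS, this]

/-- commuting with each single flip implies commuting with the set flip -/
lemma commute_FS (M : Matrix (ZMod n → Bool) (ZMod n → Bool) ℂ) (S : Finset (ZMod n))
    (h : ∀ m ∈ S, Commute M (XopC m)) : Commute M (FS S) := by
  have key : ∀ x y, M x (flp S y) = M (flp S x) y := by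
    induction S using Finset.induction_on with
    | empty =>
      have he : ∀ z : ZMod n → Bool, flp ∅ z = z := by intro z; funext i; simp [flp]
      intro x y; rw [he, he]
    | @insert m S hm ih =>
      intro x y
      have hb : ∀ x y, M x (flp {m} y) = M (flp {m} x) y := by
        have hc := h m (Finset.mem_insert_self m S)
        intro x y
        have := congrFun (congrFun hc.eq x) y
        rwa [XopC_eq_FS, mul_FS, FS_mul] at this
      have ihS := ih (fun k hk => h k (Finset.mem_insert_of_mem hk))
      calc M x (flp (insert m S) y) = M x (flp {m} (flp S y)) := by rw [flp_insert hm]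
        _ = M (flp {m} x) (flp S y) := hb _ _
        _ = M (flp S (flp {m} x)) y := ihS _ _
        _ = M (flp {m} (flp S x)) y := by rw [flp_comm]
        _ = M (flp (insert m S) x) y := by rw [← flp_insert hm]
  unfold Commute SemiconjBy
  ext x y
  rw [mul_FS, FS_mul, key]

lemma FS_comm (S T : Finset (ZMod n)) : FS S * FS T = FS T * FS S := by
  ext x y
  rw [FS_mul, FS_mul]
  simp only [FS, Matrix.of_apply, flp_comm S T]

def flpEquiv (S : Finset (ZMod n)) : (ZMod n → Bool) ≃ (ZMod n → Bool) :=
  ⟨flp S, flp S, flp_flp S, flp_flp S⟩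

lemma sum_FS_conj (B : Matrix (ZMod n → Bool) (ZMod n → Bool) ℂ) (S : Finset (ZMod n)) :
    ∑ x, ∑ y, (FS S * B * FS S) x y = ∑ x, ∑ y, B x y := by
  have h : ∀ x y, (FS S * B * FS S) x y = B (flp S x) (flp S y) := by
    intro x y; rw [mul_FS, FS_mul]
  simp_rw [h]
  rw [Fintype.sum_equiv (flpEquiv S) _ (fun x => ∑ y, B x y)]
  intro x
  exact Fintype.sum_equiv (flpEquiv S) _ _ (fun y => rfl)

lemma Xall_Z_Xall (j : ZMod n) : XallC n * ZopC j * XallC n = -(ZopC j) := by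
  rw [XallC_eq_FS]
  ext x y
  rw [mul_FS, FS_mul]
  have hinj : flp Finset.univ x = flp Finset.univ y ↔ x = y := by
    constructor
    · intro h; have := congrArg (flp Finset.univ) h; rwa [flp_flp, flp_flp] at this
    · rintro rfl; rfl
  simp only [ZopC, Matrix.diagonal_apply, Matrix.neg_apply, hinj]
  by_cases hxy : x = y
  · subst hxy
    simp only [if_pos rfl]
    have : flp Finset.univ x j = !x j := by simp [flp]
    rw [this]; cases x j <;> simp
  · simp [hxy]

lemma dist_shift {R : ℕ} (hnR : 4 * R + 2 ≤ n) (j m : ZMod n)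
    (h : cyclicDist j m ≤ R) :
    R < cyclicDist (j + ((2 * R + 1 : ℕ) : ZMod n)) m := by
  set a := (j - m).val with ha
  have hvlt : a < n := ZMod.val_lt _
  have hb : ((j + ((2 * R + 1 : ℕ) : ZMod n)) - m).val = (a + (2 * R + 1)) % n := by
    have h1 : (j + ((2 * R + 1 : ℕ) : ZMod n)) - m = (j - m) + ((2 * R + 1 : ℕ) : ZMod n) := by
      ring
    rw [h1, ZMod.val_add, ZMod.val_natCast, ← ha, Nat.mod_eq_of_lt (show 2 * R + 1 < n by omega)]
  have hmin : min a (n - a) ≤ R := h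
  rw [cyclicDist, hb]
  rcases le_or_gt a R with hc | hc
  · have : (a + (2 * R + 1)) % n = a + (2 * R + 1) := Nat.mod_eq_of_lt (by omega)
    rw [this]
    apply lt_min <;> omega
  · have hna : n - a ≤ R := by omega
    have h2 : (a + (2 * R + 1)) % n = a + (2 * R + 1) - n := by
      rw [Nat.mod_eq_sub_mod (by omega), Nat.mod_eq_of_lt (by omega)]
    rw [h2]
    apply lt_min <;> omega

lemma inner_transfer (U M : Matrix (ZMod n → Bool) (ZMod n → Bool) ℂ) (v : (ZMod n → Bool) → ℂ) :
    star (U.mulVec v) ⬝ᵥ M.mulVec (U.mulVec v) = star v ⬝ᵥ (Uᴴ * M * U).mulVec v := by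
  rw [star_mulVec, mulVec_mulVec, dotProduct_mulVec, vecMul_vecMul,
    dotProduct_mulVec, Matrix.mul_assoc]

lemma inner_plus (B : Matrix (ZMod n → Bool) (ZMod n → Bool) ℂ) :
    star (plusC n) ⬝ᵥ B.mulVec (plusC n)
      = (((1 / Real.sqrt (2 ^ n) : ℝ) : ℂ))^2 * ∑ x, ∑ y, B x y := by
  simp only [dotProduct, Matrix.mulVec, dotProduct, plusC, Pi.star_apply,
    Complex.star_def, Complex.conj_ofReal, Finset.mul_sum, Finset.sum_mul]
  apply Finset.sum_congr rfl
  intro x _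
  apply Finset.sum_congr rfl
  intro y _
  ring

lemma corr_zero (R : ℕ) (hnR : 4 * R + 2 ≤ n)
    (U : Matrix (ZMod n → Bool) (ZMod n → Bool) ℂ)
    (hU : Uᴴ * U = 1 ∧ U * Uᴴ = 1)
    (hsym : U * XallC n = XallC n * U)
    (hrange : ∀ j k : ZMod n, R < cyclicDist j k →
      Commute (Uᴴ * ZopC j * U) (ZopC k) ∧ Commute (Uᴴ * ZopC j * U) (XopC k))
    (j : ZMod n) :
    star (U.mulVec (plusC n)) ⬝ᵥ
      ((ZopC j * ZopC (j + ((2 * R + 1 : ℕ) : ZMod n))).mulVec (U.mulVec (plusC n))) = 0 := by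
  set k := j + ((2 * R + 1 : ℕ) : ZMod n) with hk
  set S : Finset (ZMod n) := Finset.univ.filter (fun m => cyclicDist j m ≤ R) with hS
  set Aj := Uᴴ * ZopC j * U with hAj
  set Ak := Uᴴ * ZopC k * U with hAk
  have hGj : Commute Aj (FS Sᶜ) := by
    apply commute_FS
    intro m hm
    have : ¬ cyclicDist j m ≤ R := by
      intro hle
      exact (Finset.mem_compl.mp hm) (by simp [hS, hle])
    exact (hrange j m (by omega)).2
  have hFk : Commute Ak (FS S) := by
    apply commute_FS
    intro m hm
    have hle : cyclicDist j m ≤ R := (Finset.mem_filter.mp hm).2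
    exact (hrange k m (dist_shift hnR j m hle)).2
  have hXU : Uᴴ * XallC n = XallC n * Uᴴ := by
    calc Uᴴ * XallC n = Uᴴ * XallC n * (U * Uᴴ) := by rw [hU.2, mul_one]
    _ = Uᴴ * (XallC n * U) * Uᴴ := by noncomm_ring
    _ = Uᴴ * (U * XallC n) * Uᴴ := by rw [hsym]
    _ = (Uᴴ * U) * (XallC n * Uᴴ) := by noncomm_ring
    _ = XallC n * Uᴴ := by rw [hU.1, one_mul]
  have hXAj : XallC n * Aj * XallC n = -Aj := by
    calc XallC n * Aj * XallC n
        = (XallC n * Uᴴ) * ZopC j * (U * XallC n) := by rw [hAj]; noncomm_ring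
    _ = (Uᴴ * XallC n) * ZopC j * (XallC n * U) := by rw [hXU, hsym]
    _ = Uᴴ * (XallC n * ZopC j * XallC n) * U := by noncomm_ring
    _ = Uᴴ * (-(ZopC j)) * U := by rw [Xall_Z_Xall]
    _ = -Aj := by rw [hAj]; noncomm_ring
  have hFS1 : FS S = XallC n * FS Sᶜ := by
    rw [← FS_compl S, Matrix.mul_assoc, FS_FS, mul_one]
  have hFS2 : FS S = FS Sᶜ * XallC n := by
    rw [← FS_compl S, FS_comm, ← Matrix.mul_assoc, FS_FS, one_mul]
  have hGAG : FS Sᶜ * Aj * FS Sᶜ = Aj := by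
    rw [show FS Sᶜ * Aj = Aj * FS Sᶜ from hGj.eq.symm, Matrix.mul_assoc, FS_FS, mul_one]
  have hFAj : FS S * Aj * FS S = -Aj := by
    calc FS S * Aj * FS S = (XallC n * FS Sᶜ) * Aj * (FS Sᶜ * XallC n) := by
          rw [← hFS1, ← hFS2]
    _ = XallC n * (FS Sᶜ * Aj * FS Sᶜ) * XallC n := by noncomm_ring
    _ = XallC n * Aj * XallC n := by rw [hGAG]
    _ = -Aj := hXAj
  have hFAk : FS S * Ak * FS S = Ak := by
    rw [show FS S * Ak = Ak * FS S from hFk.eq.symm, Matrix.mul_assoc, FS_FS, mul_one]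
  have hB : Uᴴ * (ZopC j * ZopC k) * U = Aj * Ak := by
    calc Uᴴ * (ZopC j * ZopC k) * U
        = Uᴴ * ZopC j * (U * Uᴴ) * ZopC k * U := by rw [hU.2]; noncomm_ring
    _ = Aj * Ak := by rw [hAj, hAk]; noncomm_ring
  have hFBF : FS S * (Aj * Ak) * FS S = -(Aj * Ak) := by
    calc FS S * (Aj * Ak) * FS S
        = (FS S * Aj * FS S) * (FS S * Ak * FS S) := by
          rw [show (FS S * Aj * FS S) * (FS S * Ak * FS S)
              = FS S * Aj * (FS S * FS S) * Ak * FS S from by noncomm_ring, FS_FS]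
          noncomm_ring
    _ = -(Aj * Ak) := by rw [hFAj, hFAk]; noncomm_ring
  have hsum : ∑ x, ∑ y, (Aj * Ak) x y = 0 := by
    have h0 := sum_FS_conj (Aj * Ak) S
    rw [hFBF] at h0
    simp only [Matrix.neg_apply, Finset.sum_neg_distrib] at h0
    linear_combination (-1/2 : ℂ) * h0
  rw [inner_transfer, hB, inner_plus, hsum, mul_zero]

/-- number of agreeing edges in the window of `2R+1` edges starting at `j` -/
def wcount (R : ℕ) (j : ZMod n) (x : ZMod n → Bool) : ℕ :=
  ((Finset.range (2 * R + 1)).filter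
    (fun i : ℕ => x (j + (i : ZMod n)) = x (j + (i : ZMod n) + 1))).card

lemma wcount_pos (R : ℕ) (j : ZMod n) (x : ZMod n → Bool)
    (h : x j = x (j + ((2 * R + 1 : ℕ) : ZMod n))) : 1 ≤ wcount R j x := by
  by_contra hw
  have hw0 : wcount R j x = 0 := by omega
  have hall : ∀ i ∈ Finset.range (2 * R + 1),
      ¬ (x (j + (i : ZMod n)) = x (j + (i : ZMod n) + 1)) := by
    intro i hi hx
    have := Finset.card_eq_zero.mp hw0
    have : i ∈ (Finset.range (2 * R + 1)).filter
        (fun i : ℕ => x (j + (i : ZMod n)) = x (j + (i : ZMod n) + 1)) :=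
      Finset.mem_filter.mpr ⟨hi, hx⟩
    simp_all
  have key : ∀ i ≤ 2 * R + 1, x (j + (i : ZMod n)) = if Even i then x j else !(x j) := by
    intro i
    induction i with
    | zero => intro _; simp
    | succ i ih =>
      intro hi
      have hlt : i ∈ Finset.range (2 * R + 1) := Finset.mem_range.mpr (by omega)
      have hne := hall i hlt
      have hstep : x (j + ((i+1 : ℕ) : ZMod n)) = !(x (j + (i : ZMod n))) := by
        have : x (j + (i : ZMod n) + 1) ≠ x (j + (i : ZMod n)) := fun hh => hne hh.symm
        have h2 : (j + ((i+1 : ℕ) : ZMod n)) = j + (i : ZMod n) + 1 := by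
          push_cast; ring
        rw [h2]
        cases hx : x (j + (i : ZMod n)) <;> cases hy : x (j + (i : ZMod n) + 1) <;>
          simp_all
      rw [hstep, ih (by omega)]
      rcases Nat.even_or_odd i with he | ho
      · simp [he, Nat.even_add_one, he]
      · have : ¬ Even i := Nat.not_even_iff_odd.mpr ho
        simp [this, Nat.even_add_one]
  have hodd : ¬ Even (2 * R + 1) := by simp [Nat.even_add_one, parity_simps]
  have := key (2 * R + 1) le_rfl
  rw [if_neg hodd] at this
  rw [this] at h
  cases x j <;> simp_all

lemma wcount_sum (R : ℕ) (x : ZMod n → Bool) :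
    ∑ j : ZMod n, wcount R j x
      = (2 * R + 1) * (Finset.univ.filter (fun p : ZMod n => x p = x (p + 1))).card := by
  have h1 : ∀ j, wcount R j x = ∑ i ∈ Finset.range (2 * R + 1),
      if x (j + (i : ZMod n)) = x (j + (i : ZMod n) + 1) then 1 else 0 := by
    intro j; rw [wcount, Finset.card_filter]
  simp_rw [h1]
  rw [Finset.sum_comm]
  have h2 : ∀ i ∈ Finset.range (2 * R + 1), ∑ j : ZMod n,
      (if x (j + (i : ZMod n)) = x (j + (i : ZMod n) + 1) then 1 else 0)
      = (Finset.univ.filter (fun p : ZMod n => x p = x (p + 1))).card := by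
    intro i _
    rw [Finset.card_filter]
    exact Fintype.sum_equiv (Equiv.addRight (i : ZMod n)) _ _ (fun j => rfl)
  rw [Finset.sum_congr rfl h2]
  simp [Finset.sum_const, mul_comm]

lemma diag_expect (d : (ZMod n → Bool) → ℂ) (ψ : (ZMod n → Bool) → ℂ) :
    star ψ ⬝ᵥ (Matrix.diagonal d).mulVec ψ
      = ∑ x, d x * ((Complex.normSq (ψ x) : ℝ) : ℂ) := by
  simp only [dotProduct, Matrix.mulVec_diagonal, Pi.star_apply, Complex.star_def]
  apply Finset.sum_congr rfl
  intro x _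
  rw [show (starRingEnd ℂ) (ψ x) * (d x * ψ x) = d x * (ψ x * (starRingEnd ℂ) (ψ x)) by ring,
    Complex.mul_conj]

lemma norm_one (U : Matrix (ZMod n → Bool) (ZMod n → Bool) ℂ) (hU1 : Uᴴ * U = 1) :
    ∑ x, Complex.normSq (U.mulVec (plusC n) x) = 1 := by
  have h1 : star (U.mulVec (plusC n)) ⬝ᵥ (Matrix.diagonal (fun _ => (1:ℂ))).mulVec
      (U.mulVec (plusC n)) = 1 := by
    have hd : (Matrix.diagonal (fun _ => (1:ℂ)) : Matrix (ZMod n → Bool) (ZMod n → Bool) ℂ)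
        = 1 := by rw [Matrix.diagonal_one]
    rw [hd, inner_transfer, mul_one, hU1, Matrix.one_mulVec]
    have hc : ∀ x : ZMod n → Bool,
        star (plusC n) x * plusC n x = ((1 / (2:ℝ)^n : ℝ) : ℂ) := by
      intro x
      simp only [plusC, Pi.star_apply, Complex.star_def, Complex.conj_ofReal]
      rw [← Complex.ofReal_mul]
      congr 1
      rw [div_mul_div_comm, one_mul, Real.mul_self_sqrt (by positivity)]
    rw [dotProduct]
    rw [Finset.sum_congr rfl (fun x _ => hc x)]
    rw [Finset.sum_const]
    have hcard : Fintype.card (ZMod n → Bool) = 2 ^ n := by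
      rw [Fintype.card_fun, Fintype.card_bool, ZMod.card]
    simp only [Finset.card_univ, hcard, nsmul_eq_mul]
    rw [← Complex.ofReal_natCast, ← Complex.ofReal_mul]
    norm_num
  rw [diag_expect] at h1
  simp only [one_mul] at h1
  rw [← Complex.ofReal_sum] at h1
  exact_mod_cast h1

theorem stmt3' (n R : ℕ) [NeZero n] (hn : Even n) (hnR : 4 * R + 2 ≤ n)
    (U : Matrix (ZMod n → Bool) (ZMod n → Bool) ℂ)
    (hU : Uᴴ * U = 1 ∧ U * Uᴴ = 1)
    (hsym : U * XallC n = XallC n * U)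
    (hrange : ∀ j k : ZMod n, R < cyclicDist j k →
      Commute (Uᴴ * ZopC j * U) (ZopC k) ∧ Commute (Uᴴ * ZopC j * U) (XopC k)) :
    (star (U.mulVec (plusC n)) ⬝ᵥ (ringHam n).mulVec (U.mulVec (plusC n))).im = 0 ∧
    (star (U.mulVec (plusC n)) ⬝ᵥ (ringHam n).mulVec (U.mulVec (plusC n))).re ≤
      (n : ℝ) * (2 * R + 1 / 2) / (2 * R + 1) := by
  set ψ := U.mulVec (plusC n) with hψ
  set μ : (ZMod n → Bool) → ℝ := fun x => Complex.normSq (ψ x) with hμ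
  have hμ0 : ∀ x, 0 ≤ μ x := fun x => Complex.normSq_nonneg _
  have hμ1 : ∑ x, μ x = 1 := norm_one U hU.1
  set dis : (ZMod n → Bool) → ℕ :=
    fun x => (Finset.univ.filter (fun p : ZMod n => x p ≠ x (p + 1))).card with hdis
  set agr : (ZMod n → Bool) → ℕ :=
    fun x => (Finset.univ.filter (fun p : ZMod n => x p = x (p + 1))).card with hagr
  set E : ℝ := ∑ x, (dis x : ℝ) * μ x with hE
  -- the expectation value is the real number E
  have hmain : star ψ ⬝ᵥ (ringHam n).mulVec ψ = ((E : ℝ) : ℂ) := by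
    rw [ringHam, diag_expect, hE]
    push_cast
    rfl
  refine ⟨by rw [hmain]; exact Complex.ofReal_im _, ?_⟩
  rw [hmain, Complex.ofReal_re]
  -- the correlation constraints
  have hC : ∀ j : ZMod n, ∑ x, (((if x j then (-1:ℝ) else 1) *
      (if x (j + ((2 * R + 1 : ℕ) : ZMod n)) then -1 else 1)) * μ x) = 0 := by
    intro j
    have h0 := corr_zero R hnR U hU hsym hrange j
    rw [show ZopC j * ZopC (j + ((2 * R + 1 : ℕ) : ZMod n)) = Matrix.diagonal
        (fun x => (if x j then (-1:ℂ) else 1) *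
          (if x (j + ((2 * R + 1 : ℕ) : ZMod n)) then -1 else 1)) from by
        rw [ZopC, ZopC, Matrix.diagonal_mul_diagonal], ← hψ, diag_expect] at h0
    have hcast : ∀ x, ((if x j then (-1:ℂ) else 1) *
        (if x (j + ((2 * R + 1 : ℕ) : ZMod n)) then -1 else 1)) * ((μ x : ℝ) : ℂ)
        = ((((if x j then (-1:ℝ) else 1) *
          (if x (j + ((2 * R + 1 : ℕ) : ZMod n)) then -1 else 1)) * μ x : ℝ) : ℂ) := by
      intro x
      cases hx : x j <;> cases hy : x (j + ((2 * R + 1 : ℕ) : ZMod n)) <;>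
        simp [hx, hy] <;> push_cast <;> ring
    rw [Finset.sum_congr rfl (fun x _ => hcast x), ← Complex.ofReal_sum] at h0
    exact_mod_cast h0
  -- pointwise window bound
  have hpt : ∀ (j : ZMod n) (x : ZMod n → Bool),
      (1 + (if x j then (-1:ℝ) else 1) *
        (if x (j + ((2 * R + 1 : ℕ) : ZMod n)) then -1 else 1)) / 2 ≤ (wcount R j x : ℝ) := by
    intro j x
    by_cases h : x j = x (j + ((2 * R + 1 : ℕ) : ZMod n))
    · have h1 := wcount_pos R j x h
      rw [← h]
      have : (1 + (if x j then (-1:ℝ) else 1) * (if x j then -1 else 1)) / 2 = 1 := by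
        cases x j <;> norm_num
      rw [this]
      exact_mod_cast h1
    · have : (if x j then (-1:ℝ) else 1) *
          (if x (j + ((2 * R + 1 : ℕ) : ZMod n)) then -1 else 1) = -1 := by
        cases hx : x j <;> cases hy : x (j + ((2 * R + 1 : ℕ) : ZMod n)) <;> simp_all
      rw [this]
      norm_num
  -- chain of inequalities
  have hj : ∀ j : ZMod n, ∑ x, ((1 + (if x j then (-1:ℝ) else 1) *
      (if x (j + ((2 * R + 1 : ℕ) : ZMod n)) then -1 else 1)) / 2) * μ x = 1 / 2 := by
    intro j
    have hterm : ∀ x, ((1 + (if x j then (-1:ℝ) else 1) *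
        (if x (j + ((2 * R + 1 : ℕ) : ZMod n)) then -1 else 1)) / 2) * μ x
        = μ x / 2 + ((if x j then (-1:ℝ) else 1) *
          (if x (j + ((2 * R + 1 : ℕ) : ZMod n)) then -1 else 1) * μ x) / 2 := by
      intro x; ring
    rw [Finset.sum_congr rfl (fun x _ => hterm x), Finset.sum_add_distrib,
      ← Finset.sum_div, ← Finset.sum_div, hμ1, hC j]
    norm_num
  have step1 : (n : ℝ) / 2 = ∑ j : ZMod n, ∑ x, ((1 + (if x j then (-1:ℝ) else 1) *
      (if x (j + ((2 * R + 1 : ℕ) : ZMod n)) then -1 else 1)) / 2) * μ x := by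
    rw [Finset.sum_congr rfl (fun j _ => hj j), Finset.sum_const, Finset.card_univ, ZMod.card,
      nsmul_eq_mul]
    ring
  have step2 : ∑ j : ZMod n, ∑ x, ((1 + (if x j then (-1:ℝ) else 1) *
      (if x (j + ((2 * R + 1 : ℕ) : ZMod n)) then -1 else 1)) / 2) * μ x
      ≤ ∑ j : ZMod n, ∑ x, (wcount R j x : ℝ) * μ x := by
    apply Finset.sum_le_sum
    intro j _
    apply Finset.sum_le_sum
    intro x _
    exact mul_le_mul_of_nonneg_right (hpt j x) (hμ0 x)
  have step3 : ∑ j : ZMod n, ∑ x, (wcount R j x : ℝ) * μ x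
      = (2 * R + 1 : ℝ) * ∑ x, (agr x : ℝ) * μ x := by
    rw [Finset.sum_comm, Finset.mul_sum]
    apply Finset.sum_congr rfl
    intro x _
    rw [← Finset.sum_mul]
    have : ∑ j : ZMod n, (wcount R j x : ℝ) = ((2 * R + 1) * agr x : ℕ) := by
      rw [← wcount_sum R x]; push_cast; rfl
    rw [this]; push_cast; ring
  have hagrd : ∀ x, (agr x : ℝ) = (n : ℝ) - dis x := by
    intro x
    have := Finset.card_filter_add_card_filter_not
      (s := (Finset.univ : Finset (ZMod n))) (p := fun p => x p = x (p + 1))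
    rw [Finset.card_univ, ZMod.card] at this
    have hle : agr x + dis x = n := by
      rw [hagr, hdis]
      simpa using this
    have := congrArg (fun m : ℕ => (m : ℝ)) hle
    push_cast at this
    linarith
  have step4 : ∑ x, (agr x : ℝ) * μ x = (n : ℝ) - E := by
    rw [Finset.sum_congr rfl (fun x _ => by rw [hagrd x])]
    simp only [sub_mul]
    rw [Finset.sum_sub_distrib, ← Finset.mul_sum, hμ1, mul_one, hE]
  have hfinal : (n : ℝ) / 2 ≤ (2 * R + 1 : ℝ) * ((n : ℝ) - E) := by
    rw [step1, ← step4, ← step3]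
    exact step2
  have hpos : (0 : ℝ) < 2 * R + 1 := by positivity
  rw [le_div_iff₀ hpos]
  nlinarith [hfinal]

end Aux

theorem stmt3 (n R : ℕ) [NeZero n] (hn : Even n) (hnR : 4 * R + 2 ≤ n)
    (U : Matrix (ZMod n → Bool) (ZMod n → Bool) ℂ)
    (hU : Uᴴ * U = 1 ∧ U * Uᴴ = 1)
    (hsym : U * XallC n = XallC n * U)
    (hrange : ∀ j k : ZMod n, R < cyclicDist j k →
      Commute (Uᴴ * ZopC j * U) (ZopC k) ∧ Commute (Uᴴ * ZopC j * U) (XopC k)) :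
    (star (U.mulVec (plusC n)) ⬝ᵥ (ringHam n).mulVec (U.mulVec (plusC n))).im = 0 ∧
    (star (U.mulVec (plusC n)) ⬝ᵥ (ringHam n).mulVec (U.mulVec (plusC n))).re ≤
      (n : ℝ) * (2 * R + 1 / 2) / (2 * R + 1) :=
  stmt3' n R hn hnR U hU hsym hrange
end

section
/- Let n be even and R a natural number with n ≥ 4R + 2. Let p : (ZMod n → Bool) → ℝ be a probability distribution such that for all j, k ∈ ZMod n with cyclic distance dist(j,k) > 2R one has p({x : x j ≠ x k}) = 1/2. Then Σ_{i∈ZMod n} p({x : x i ≠ x (i+1)}) ≥ n/(2(2R+1)). -/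
lemma chain_eq {n : ℕ} [NeZero n] (x : ZMod n → Bool) (j : ZMod n) (c : ℕ)
    (h : ∀ m < c, x (j + m) = x (j + m + 1)) : x j = x (j + c) := by
  induction c with
  | zero => simp
  | succ c ih =>
    have h1 := h c (Nat.lt_succ_self c)
    have e : x j = x (j + c) := ih (fun m hm => h m (hm.trans (Nat.lt_succ_self c)))
    rw [e, h1]
    congr 1
    push_cast
    ring

theorem stmt6 (n R : ℕ) [NeZero n] (hn : Even n) (hnR : 4 * R + 2 ≤ n)
    (p : ((ZMod n) → Bool) → ℝ)
    (hp0 : ∀ x, 0 ≤ p x) (hp1 : ∑ x, p x = 1)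
    (hfar : ∀ j k : ZMod n, 2 * R < cyclicDist j k →
      ∑ x ∈ Finset.univ.filter (fun x : (ZMod n) → Bool => x j ≠ x k), p x = 1 / 2) :
    (n : ℝ) / (2 * (2 * R + 1)) ≤
      ∑ i : ZMod n,
        ∑ x ∈ Finset.univ.filter (fun x : (ZMod n) → Bool => x i ≠ x (i + 1)), p x := by
  set c : ℕ := 2 * R + 1 with hc
  set D : ZMod n → ℝ := fun i =>
    ∑ x ∈ Finset.univ.filter (fun x : (ZMod n) → Bool => x i ≠ x (i + 1)), p x with hD
  have hcn : c < n := by omega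
  have hD0 : ∀ i, 0 ≤ D i := fun i => Finset.sum_nonneg fun x _ => hp0 x
  -- key union bound
  have key : ∀ j : ZMod n, (1 : ℝ) / 2 ≤ ∑ m ∈ Finset.range c, D (j + m) := by
    intro j
    have hval : ((c : ZMod n)).val = c := ZMod.val_natCast_of_lt hcn
    have hdist : 2 * R < cyclicDist (j + (c : ZMod n)) j := by
      unfold cyclicDist
      rw [add_sub_cancel_left, hval]
      omega
    have hf := hfar _ j hdist
    calc (1 : ℝ) / 2
        = ∑ x ∈ Finset.univ.filter
            (fun x : (ZMod n) → Bool => x (j + (c : ZMod n)) ≠ x j), p x := hf.symm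
      _ ≤ ∑ x ∈ Finset.univ.filter
            (fun x : (ZMod n) → Bool => x (j + (c : ZMod n)) ≠ x j),
            ∑ m ∈ Finset.range c, if x (j + m) ≠ x (j + m + 1) then p x else 0 := by
          apply Finset.sum_le_sum
          intro x hx
          simp only [Finset.mem_filter, Finset.mem_univ, true_and] at hx
          have hex : ∃ m < c, x (j + m) ≠ x (j + m + 1) := by
            by_contra hcon
            push_neg at hcon
            exact hx (chain_eq x j c hcon).symm
          obtain ⟨m, hm, hne⟩ := hex
          have := Finset.single_le_sum
            (s := Finset.range c) (f := fun m : ℕ => if x (j + m) ≠ x (j + m + 1) then p x else 0)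
            (fun i _ => by split_ifs <;> simp [hp0 x]) (Finset.mem_range.mpr hm)
          simpa [hne] using this
      _ = ∑ m ∈ Finset.range c, ∑ x ∈ Finset.univ.filter
            (fun x : (ZMod n) → Bool => x (j + (c : ZMod n)) ≠ x j),
            (if x (j + m) ≠ x (j + m + 1) then p x else 0) := Finset.sum_comm
      _ ≤ ∑ m ∈ Finset.range c, D (j + m) := by
          apply Finset.sum_le_sum
          intro m _
          rw [← Finset.sum_filter]
          apply Finset.sum_le_sum_of_subset_of_nonneg
          · intro x hx
            simp only [Finset.mem_filter, Finset.mem_univ, true_and] at hx ⊢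
            exact hx.2
          · exact fun x _ _ => hp0 x
  -- sum over j
  have sum_key : (n : ℝ) * (1 / 2) ≤ ∑ j : ZMod n, ∑ m ∈ Finset.range c, D (j + m) := by
    calc (n : ℝ) * (1 / 2) = ∑ _j : ZMod n, (1 : ℝ) / 2 := by
          rw [Finset.sum_const, Finset.card_univ, ZMod.card, nsmul_eq_mul]
      _ ≤ _ := Finset.sum_le_sum fun j _ => key j
  have swap : ∑ j : ZMod n, ∑ m ∈ Finset.range c, D (j + m)
      = (c : ℝ) * ∑ i : ZMod n, D i := by
    rw [Finset.sum_comm]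
    have : ∀ m : ℕ, ∑ j : ZMod n, D (j + m) = ∑ i : ZMod n, D i := fun m =>
      Fintype.sum_equiv (Equiv.addRight (m : ZMod n)) _ D (fun j => rfl)
    simp [this, Finset.sum_const, mul_comm]
  rw [swap] at sum_key
  have hcpos : (0 : ℝ) < (c : ℝ) := by positivity
  rw [div_le_iff₀ (by positivity)]
  have hS : 0 ≤ ∑ i : ZMod n, D i := Finset.sum_nonneg fun i _ => hD0 i
  have hcr : ((2 : ℝ) * (2 * R + 1)) = 2 * (c : ℝ) := by push_cast [hc]; ring
  rw [hcr]
  nlinarith [sum_key]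
end

section
/- Let R and m be natural numbers with m ≥ 1, let n = m(2R+1), and suppose n is even. For b : Fin m → Bool define x_b : ZMod n → Bool by x_b(j) = xor (b(⌊j.val/(2R+1)⌋)) (j.val % 2 = 1), where j.val ∈ {0,…,n−1} is the canonical representative. Then the average over all 2^m choices of b of the number of j ∈ ZMod n with x_b(j) ≠ x_b(j+1) equals n·(2R + 1/2)/(2R + 1), i.e. (1/2^m)·Σ_{b : Fin m → Bool} #{j ∈ ZMod n : x_b(j) ≠ x_b(j+1)} = m·(2R + 1/2). -/
open Finset

lemma aux_half {m : ℕ} (k k' : Fin m) (hkk : k ≠ k') (p p' : Bool) :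
    ∑ b : Fin m → Bool, (if xor (b k) p ≠ xor (b k') p' then (1:ℝ) else 0)
      = 2 ^ m / 2 := by
  classical
  rw [Finset.sum_boole]
  set P : (Fin m → Bool) → Prop := fun b => xor (b k) p ≠ xor (b k') p' with hP
  have hcard : (Finset.univ.filter (fun b : Fin m → Bool => ¬ P b)).card
      = (Finset.univ.filter P).card := by
    apply Finset.card_nbij' (i := fun b => Function.update b k (!(b k)))
      (j := fun b => Function.update b k (!(b k)))
    · intro b hb
      simp only [Finset.mem_coe, Finset.mem_filter, Finset.mem_univ, true_and, hP] at hb ⊢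
      rw [Function.update_self, Function.update_of_ne (Ne.symm hkk)]
      revert hb
      cases b k <;> cases b k' <;> cases p <;> cases p' <;> simp
    · intro b hb
      simp only [Finset.mem_coe, Finset.mem_filter, Finset.mem_univ, true_and, hP] at hb ⊢
      rw [Function.update_self, Function.update_of_ne (Ne.symm hkk)]
      revert hb
      cases b k <;> cases b k' <;> cases p <;> cases p' <;> simp
    · intro b _
      funext i
      by_cases hi : i = k
      · subst hi; simp [Function.update_self]
      · simp [Function.update_of_ne hi]
    · intro b _
      funext i
      by_cases hi : i = k
      · subst hi; simp [Function.update_self]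
      · simp [Function.update_of_ne hi]
  have htot := Finset.card_filter_add_card_filter_not (s := (Finset.univ : Finset (Fin m → Bool))) (p := P)
  rw [hcard, Finset.card_univ] at htot
  have hcu : Fintype.card (Fin m → Bool) = 2 ^ m := by
    simp [Fintype.card_fun]
  rw [hcu] at htot
  have : ((Finset.univ.filter P).card : ℝ) + ((Finset.univ.filter P).card : ℝ) = 2 ^ m := by
    exact_mod_cast congrArg (Nat.cast : ℕ → ℝ) htot
  linarith

lemma aux_modsum (g : ℕ → ℝ) (d : ℕ) (hd : 0 < d) (m : ℕ) :
    ∑ i ∈ Finset.range (m * d), g (i % d) = m * ∑ r ∈ Finset.range d, g r := by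
  induction m with
  | zero => simp
  | succ m ih =>
    have h1 : (m + 1) * d = m * d + d := by ring
    rw [h1, Finset.range_eq_Ico,
      ← Finset.sum_Ico_consecutive _ (Nat.zero_le (m * d)) (Nat.le_add_right (m * d) d),
      ← Finset.range_eq_Ico, ih, Finset.sum_Ico_eq_sum_range]
    have hcanc : m * d + d - m * d = d := by omega
    rw [hcanc]
    have h2 : ∀ i ∈ Finset.range d, g ((m * d + i) % d) = g i := by
      intro i hi
      congr 1
      conv_lhs => rw [add_comm, Nat.add_mul_mod_self_right]
      exact Nat.mod_eq_of_lt (Finset.mem_range.mp hi)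
    rw [Finset.sum_congr rfl h2]
    push_cast
    ring

theorem stmt8 (R m n : ℕ) (hm : 1 ≤ m) (hn : n = m * (2 * R + 1)) (hne : Even n)
    [NeZero n]
    (xb : (Fin m → Bool) → (ZMod n) → Bool)
    (hxb : ∀ (b : Fin m → Bool) (j : ZMod n),
      xb b j = xor (b ⟨j.val / (2 * R + 1),
          Nat.div_lt_of_lt_mul (by rw [mul_comm]; exact hn ▸ j.val_lt)⟩)
        (decide (j.val % 2 = 1))) :
    (1 / (2 : ℝ) ^ m) *
      ∑ b : Fin m → Bool,
        ((Finset.univ.filter (fun j : ZMod n => xb b j ≠ xb b (j + 1))).card : ℝ) =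
      m * (2 * R + 1 / 2) := by
  classical
  have hd : 0 < 2 * R + 1 := by omega
  have hmeven : Even m := by
    rcases Nat.even_mul.mp (hn ▸ hne) with h | h
    · exact h
    · obtain ⟨t, ht⟩ := h; omega
  have hm2 : 2 ≤ m := by obtain ⟨t, ht⟩ := hmeven; omega
  have h2d : 2 * (2 * R + 1) ≤ n := by
    rw [hn]; exact Nat.mul_le_mul_right _ hm2
  have hn1 : 1 < n := by omega
  have hval1 : (1 : ZMod n).val = 1 := by
    have := ZMod.val_cast_of_lt (n := n) (a := 1) hn1
    simpa using this
  have hvaladd : ∀ j : ZMod n, (j + 1).val = (j.val + 1) % n := by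
    intro j; rw [ZMod.val_add, hval1]
  have hcard : ∀ b : Fin m → Bool,
      ((Finset.univ.filter (fun j : ZMod n => xb b j ≠ xb b (j + 1))).card : ℝ)
        = ∑ j : ZMod n, if xb b j ≠ xb b (j + 1) then (1:ℝ) else 0 := by
    intro b; rw [Finset.sum_boole]
  simp_rw [hcard]
  rw [Finset.sum_comm]
  have key : ∀ j : ZMod n,
      (∑ b : Fin m → Bool, if xb b j ≠ xb b (j + 1) then (1:ℝ) else 0)
        = if j.val % (2 * R + 1) = 2 * R then (2:ℝ) ^ m / 2 else 2 ^ m := by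
    intro j
    simp_rw [hxb]
    have hjlt : j.val < n := j.val_lt
    have hq := Nat.div_add_mod j.val (2 * R + 1)
    set q := j.val / (2 * R + 1) with hqdef
    set r := j.val % (2 * R + 1) with hrdef
    have hrlt : r < 2 * R + 1 := Nat.mod_lt _ hd
    by_cases hr : r = 2 * R
    · rw [if_pos hr]
      by_cases hend : j.val + 1 = n
      · have hv1 : (j + 1).val = 0 := by rw [hvaladd, hend, Nat.mod_self]
        have hb1 : (j + 1).val / (2 * R + 1) = 0 := by rw [hv1]; simp
        have hqpos : 0 < q := Nat.div_pos (by omega) hd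
        have hbne : j.val / (2 * R + 1) ≠ (j + 1).val / (2 * R + 1) := by
          rw [hb1, ← hqdef]; omega
        exact aux_half _ _ (fun h => hbne (congrArg Fin.val h)) _ _
      · have hlt : j.val + 1 < n := by omega
        have hv1 : (j + 1).val = j.val + 1 := by
          rw [hvaladd, Nat.mod_eq_of_lt hlt]
        have hmul : (2 * R + 1) * (q + 1) = (2 * R + 1) * q + (2 * R + 1) := by ring
        have hsum : j.val + 1 = (2 * R + 1) * (q + 1) := by omega
        have hdiv1 : (j + 1).val / (2 * R + 1) = q + 1 := by
          rw [hv1, hsum, Nat.mul_div_cancel_left _ hd]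
        have hbne : j.val / (2 * R + 1) ≠ (j + 1).val / (2 * R + 1) := by
          rw [hdiv1, ← hqdef]; omega
        exact aux_half _ _ (fun h => hbne (congrArg Fin.val h)) _ _
    · rw [if_neg hr]
      have e : j.val + 1 = (2 * R + 1) * q + (r + 1) := by omega
      have hmod : (j.val + 1) % (2 * R + 1) = r + 1 := by
        rw [e, Nat.mul_add_mod, Nat.mod_eq_of_lt (by omega)]
      have hlt : j.val + 1 < n := by
        rcases Nat.lt_or_ge (j.val + 1) n with h | h
        · exact h
        · exfalso
          have hEq : j.val + 1 = n := by omega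
          have hz : n % (2 * R + 1) = 0 := by rw [hn, Nat.mul_mod_left]
          rw [hEq] at hmod
          omega
      have hv1 : (j + 1).val = j.val + 1 := by
        rw [hvaladd, Nat.mod_eq_of_lt hlt]
      have hdiv1 : (j + 1).val / (2 * R + 1) = q := by
        rw [hv1, e, Nat.mul_add_div hd, Nat.div_eq_of_lt (by omega), add_zero]
      have hfeq : (⟨(j + 1).val / (2 * R + 1),
            Nat.div_lt_of_lt_mul (by rw [mul_comm]; exact hn ▸ (j+1).val_lt)⟩ : Fin m)
          = ⟨j.val / (2 * R + 1),
            Nat.div_lt_of_lt_mul (by rw [mul_comm]; exact hn ▸ j.val_lt)⟩ := by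
        apply Fin.ext
        simp only [hdiv1, ← hqdef]
      rw [hfeq]
      have hparity : decide ((j + 1).val % 2 = 1) = !decide (j.val % 2 = 1) := by
        rw [hv1]
        rcases Nat.even_or_odd j.val with hpar | hpar
        · have h0 : j.val % 2 = 0 := Nat.even_iff.mp hpar
          have h1 : (j.val + 1) % 2 = 1 := by omega
          simp [h0, h1]
        · have h0 : j.val % 2 = 1 := Nat.odd_iff.mp hpar
          have h1 : (j.val + 1) % 2 = 0 := by omega
          simp [h0, h1]
      rw [hparity]
      have hall : ∀ b : Fin m → Bool,
          xor (b ⟨j.val / (2 * R + 1),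
            Nat.div_lt_of_lt_mul (by rw [mul_comm]; exact hn ▸ j.val_lt)⟩)
              (decide (j.val % 2 = 1))
          ≠ xor (b ⟨j.val / (2 * R + 1),
            Nat.div_lt_of_lt_mul (by rw [mul_comm]; exact hn ▸ j.val_lt)⟩)
              (!decide (j.val % 2 = 1)) := by
        intro b
        cases b ⟨j.val / (2 * R + 1), _⟩ <;> cases decide (j.val % 2 = 1) <;> simp
      rw [Finset.sum_congr rfl (fun b _ => if_pos (hall b))]
      rw [Finset.sum_const, Finset.card_univ]
      simp [Fintype.card_fun]
  rw [Finset.sum_congr rfl (fun j _ => key j)]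
  have htrans : ∑ j : ZMod n, (if j.val % (2 * R + 1) = 2 * R then (2:ℝ) ^ m / 2 else 2 ^ m)
      = ∑ i ∈ Finset.range n, (if i % (2 * R + 1) = 2 * R then (2:ℝ) ^ m / 2 else 2 ^ m) := by
    apply Finset.sum_nbij' (i := fun j : ZMod n => j.val) (j := fun i : ℕ => (i : ZMod n))
    · intro j _; exact Finset.mem_range.mpr j.val_lt
    · intro i _; exact Finset.mem_univ _
    · intro j _; exact ZMod.natCast_rightInverse j
    · intro i hi; exact ZMod.val_cast_of_lt (Finset.mem_range.mp hi)
    · intro j _; rfl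
  rw [htrans, hn]
  have h2 := aux_modsum (fun t => if t = 2 * R then (2:ℝ) ^ m / 2 else 2 ^ m) (2 * R + 1) hd m
  beta_reduce at h2
  rw [h2, Finset.sum_range_succ, if_pos rfl]
  have h3 : ∑ r ∈ Finset.range (2 * R), (if r = 2 * R then (2:ℝ) ^ m / 2 else 2 ^ m)
      = (2 * R : ℝ) * 2 ^ m := by
    rw [Finset.sum_congr rfl (fun r hr => if_neg (by have := Finset.mem_range.mp hr; omega))]
    rw [Finset.sum_const, Finset.card_range]
    simp [mul_comm]
  rw [h3]
  have hp : (2:ℝ) ^ m ≠ 0 := by positivity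
  field_simp
end

section
/- Let V be a finite type, E : Finset (Finset V) a finite hypergraph, and J : Finset V → ℝ hyperedge weights. For x : V → ℝ write x(e) = ∏_{w∈e} x w and C(x) = Σ_{e∈E} J e · x(e). Fix f : Finset V, v ∈ f, and σ ∈ ℝ with σ = 1 ∨ σ = −1. For y : V → ℝ define C'(y) = Σ_{e∈E, v∉e} J e · y(e) + Σ_{e∈E, v∈e} σ · J e · y(e △ f), where △ is the symmetric difference of finite sets. Then the maximum of C(x) over all x : V → ℝ with (∀ w, x w = 1 ∨ x w = −1) and x(f) = σ equals the maximum of C'(y) over all y : V → ℝ with (∀ w, y w = 1 ∨ y w = −1) and y v = 1. -/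
lemma aux_pm_prod {V : Type*} [DecidableEq V] (y : V → ℝ)
    (hy : ∀ w, y w = 1 ∨ y w = -1) (s : Finset V) :
    (∏ w ∈ s, y w) = 1 ∨ (∏ w ∈ s, y w) = -1 := by
  refine Finset.prod_induction _ (fun t => t = 1 ∨ t = -1) ?_ (Or.inl rfl) (fun w _ => hy w)
  rintro a b (rfl|rfl) (rfl|rfl) <;> norm_num

lemma aux_prod_symmDiff {V : Type*} [DecidableEq V] (y : V → ℝ)
    (hy : ∀ w, y w = 1 ∨ y w = -1) (A B : Finset V) :
    (∏ w ∈ A, y w) * ∏ w ∈ B, y w = ∏ w ∈ symmDiff A B, y w := by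
  have h1 : (∏ w ∈ A ∪ B, y w) * ∏ w ∈ A ∩ B, y w
      = (∏ w ∈ A, y w) * ∏ w ∈ B, y w := Finset.prod_union_inter
  have h2 : A ∪ B = symmDiff A B ∪ (A ∩ B) := by
    ext w; simp [Finset.mem_symmDiff]; tauto
  have h3 : Disjoint (symmDiff A B) (A ∩ B) := by
    rw [Finset.disjoint_left]
    intro w hw hw'
    simp [Finset.mem_symmDiff] at hw
    simp at hw'
    tauto
  have hsq : (∏ w ∈ A ∩ B, y w) * ∏ w ∈ A ∩ B, y w = 1 := by
    rcases aux_pm_prod y hy (A ∩ B) with h | h <;> rw [h] <;> norm_num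
  rw [← h1, h2, Finset.prod_union h3, mul_assoc, hsq, mul_one]

theorem stmt13 (V : Type*) [Fintype V] [DecidableEq V]
    (E : Finset (Finset V)) (J : Finset V → ℝ)
    (f : Finset V) (v : V) (hv : v ∈ f) (σ : ℝ) (hσ : σ = 1 ∨ σ = -1) :
    sSup {c : ℝ | ∃ x : V → ℝ, (∀ w, x w = 1 ∨ x w = -1) ∧ (∏ w ∈ f, x w) = σ ∧
        c = ∑ e ∈ E, J e * ∏ w ∈ e, x w} =
    sSup {c : ℝ | ∃ y : V → ℝ, (∀ w, y w = 1 ∨ y w = -1) ∧ y v = 1 ∧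
        c = (∑ e ∈ E.filter (fun e => v ∉ e), J e * ∏ w ∈ e, y w) +
            (∑ e ∈ E.filter (fun e => v ∈ e), σ * J e * ∏ w ∈ symmDiff e f, y w)} := by
  have hσsq : σ * σ = 1 := by rcases hσ with rfl | rfl <;> norm_num
  congr 1
  ext c
  have hsplit : ∀ g : Finset V → ℝ, ∑ e ∈ E, g e =
      (∑ e ∈ E.filter (fun e => v ∉ e), g e) + (∑ e ∈ E.filter (fun e => v ∈ e), g e) := by
    intro g
    rw [← Finset.sum_filter_add_sum_filter_not E (fun e => v ∉ e) g]
    congr 1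
    apply Finset.sum_congr _ (fun _ _ => rfl)
    apply Finset.filter_congr
    intro e _; simp
  constructor
  · rintro ⟨x, hx, hxf, rfl⟩
    refine ⟨Function.update x v 1, ?_, Function.update_self v 1 x, ?_⟩
    · intro w
      by_cases hw : w = v
      · subst hw; simp
      · rw [Function.update_of_ne hw]; exact hx w
    rw [hsplit (fun e => J e * ∏ w ∈ e, x w)]
    congr 1
    · apply Finset.sum_congr rfl
      intro e he
      simp only [Finset.mem_filter] at he
      congr 1
      refine Finset.prod_congr rfl (fun w hw => (Function.update_of_ne ?_ 1 x).symm)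
      rintro rfl; exact he.2 hw
    · apply Finset.sum_congr rfl
      intro e he
      simp only [Finset.mem_filter] at he
      have hvd : v ∉ symmDiff e f := by
        simp [Finset.mem_symmDiff, he.2, hv]
      have hprod : (∏ w ∈ symmDiff e f, Function.update x v 1 w) = ∏ w ∈ symmDiff e f, x w := by
        refine Finset.prod_congr rfl (fun w hw => Function.update_of_ne ?_ 1 x)
        rintro rfl; exact hvd hw
      rw [hprod, ← aux_prod_symmDiff x hx e f, hxf]
      calc J e * ∏ w ∈ e, x w = J e * (∏ w ∈ e, x w) * (σ * σ) := by rw [hσsq, mul_one]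
        _ = σ * J e * ((∏ w ∈ e, x w) * σ) := by ring
  · rintro ⟨y, hy, hyv, rfl⟩
    set P : ℝ := ∏ w ∈ f.erase v, y w with hP
    have hPpm : P = 1 ∨ P = -1 := aux_pm_prod y hy _
    have hPsq : P * P = 1 := by rcases hPpm with h | h <;> rw [h] <;> norm_num
    set x : V → ℝ := Function.update y v (σ * P) with hxdef
    have hxv : x v = σ * P := Function.update_self v _ y
    have hxw : ∀ w ≠ v, x w = y w := fun w hw => Function.update_of_ne hw _ y
    refine ⟨x, ?_, ?_, ?_⟩
    · intro w
      by_cases hw : w = v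
      · subst hw; rw [hxv]
        rcases hσ with rfl | rfl <;> rcases hPpm with h | h <;> rw [h] <;> norm_num
      · rw [hxw w hw]; exact hy w
    · rw [← Finset.mul_prod_erase f x hv, hxv]
      have : (∏ w ∈ f.erase v, x w) = P :=
        Finset.prod_congr rfl (fun w hw => hxw w (Finset.ne_of_mem_erase hw))
      rw [this, mul_assoc, hPsq, mul_one]
    rw [hsplit (fun e => J e * ∏ w ∈ e, x w)]
    congr 1
    · apply Finset.sum_congr rfl
      intro e he
      simp only [Finset.mem_filter] at he
      congr 1
      refine Finset.prod_congr rfl (fun w hw => (hxw w ?_).symm)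
      rintro rfl; exact he.2 hw
    · apply Finset.sum_congr rfl
      intro e he
      simp only [Finset.mem_filter] at he
      have hprode : (∏ w ∈ e, x w) = (σ * P) * ∏ w ∈ e.erase v, y w := by
        rw [← Finset.mul_prod_erase e x he.2, hxv]
        congr 1
        exact Finset.prod_congr rfl (fun w hw => hxw w (Finset.ne_of_mem_erase hw))
      have hsd : symmDiff (f.erase v) (e.erase v) = symmDiff e f := by
        ext w
        by_cases hwv : w = v
        · subst hwv; simp [Finset.mem_symmDiff, hv, he.2]
        · simp only [Finset.mem_symmDiff, Finset.mem_erase, hwv, not_false_iff, true_and]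
          tauto
      have hthis := aux_prod_symmDiff y hy (f.erase v) (e.erase v)
      rw [hsd, ← hP] at hthis
      rw [hprode, ← hthis]
      ring
end

section
/- Let n ≥ 1 and let J : ZMod n → ℝ with J k ∈ {1, −1} for all k. Then the maximum over all x : ZMod n → ℝ with (∀ k, x k = 1 ∨ x k = −1) of C(x) = Σ_{k∈ZMod n} J k · (x k) · (x (k+1)) equals n if ∏_{k∈ZMod n} J k = 1, and equals n − 2 if ∏_{k∈ZMod n} J k = −1. -/
open Finset

section aux14

variable (n : ℕ) [NeZero n] (J : ZMod n → ℝ)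

private lemma aux14_prod_range :
    ∏ k : ZMod n, J k = ∏ i ∈ Finset.range n, J (i : ZMod n) := by
  refine Finset.prod_bij' (i := fun (k : ZMod n) _ => k.val)
    (j := fun (i : ℕ) _ => (i : ZMod n)) ?_ ?_ ?_ ?_ ?_
  · intro a _; exact Finset.mem_range.mpr a.val_lt
  · intro a _; exact Finset.mem_univ _
  · intro a _
    simp [ZMod.natCast_val, ZMod.cast_id]
  · intro a ha
    exact ZMod.val_natCast_of_lt (Finset.mem_range.mp ha)
  · intro a _
    simp [ZMod.natCast_val, ZMod.cast_id]

end aux14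

theorem stmt14 (n : ℕ) [NeZero n] (hn : 1 ≤ n)
    (J : ZMod n → ℝ) (hJ : ∀ k, J k = 1 ∨ J k = -1) :
    ((∏ k : ZMod n, J k) = 1 →
      sSup {c : ℝ | ∃ x : ZMod n → ℝ, (∀ k, x k = 1 ∨ x k = -1) ∧
          c = ∑ k : ZMod n, J k * x k * x (k + 1)} = n) ∧
    ((∏ k : ZMod n, J k) = -1 →
      sSup {c : ℝ | ∃ x : ZMod n → ℝ, (∀ k, x k = 1 ∨ x k = -1) ∧
          c = ∑ k : ZMod n, J k * x k * x (k + 1)} = n - 2) := by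
  set S : Set ℝ := {c : ℝ | ∃ x : ZMod n → ℝ, (∀ k, x k = 1 ∨ x k = -1) ∧
      c = ∑ k : ZMod n, J k * x k * x (k + 1)} with hS
  set P : ℝ := ∏ k : ZMod n, J k with hP
  -- the candidate optimal assignment
  set y : ZMod n → ℝ := fun k => ∏ i ∈ Finset.range k.val, J (i : ZMod n) with hy
  have hy1 : ∀ k, y k = 1 ∨ y k = -1 := by
    intro k
    have : ∀ m : ℕ, (∏ i ∈ Finset.range m, J (i : ZMod n)) = 1 ∨
        (∏ i ∈ Finset.range m, J (i : ZMod n)) = -1 := by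
      intro m
      induction m with
      | zero => simp
      | succ m ih =>
        rw [Finset.prod_range_succ]
        rcases ih with h | h <;> rcases hJ (m : ZMod n) with h' | h' <;>
          simp [h, h']
    exact this k.val
  set last : ZMod n := ((n - 1 : ℕ) : ZMod n) with hlast
  have hlastval : last.val = n - 1 := ZMod.val_natCast_of_lt (by omega)
  -- terms of the candidate assignment
  have hterm_ne : ∀ k : ZMod n, k ≠ last → J k * y k * y (k + 1) = 1 := by
    intro k hk
    have hkval : k.val ≠ n - 1 := by
      intro h
      apply hk
      have : (k.val : ZMod n) = k := by simp [ZMod.natCast_val, ZMod.cast_id]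
      rw [← this, h]
    have hkn : k.val + 1 < n := by have := k.val_lt; omega
    have h2 : 1 < n := by have := k.val_lt; omega
    have hone : (1 : ZMod n).val = 1 := by
      haveI : Fact (1 < n) := ⟨h2⟩
      exact ZMod.val_one n
    have hval : (k + 1).val = k.val + 1 := by
      rw [ZMod.val_add_of_lt (by rw [hone]; exact hkn), hone]
    have hyk1 : y (k + 1) = y k * J k := by
      have : (↑k.val : ZMod n) = k := by simp [ZMod.natCast_val, ZMod.cast_id]
      simp only [hy, hval, Finset.prod_range_succ, this]
    rw [hyk1]
    have hy2 : y k * y k = 1 := by rcases hy1 k with h | h <;> rw [h] <;> ring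
    have hJ2 : J k * J k = 1 := by rcases hJ k with h | h <;> rw [h] <;> ring
    calc J k * y k * (y k * J k) = (y k * y k) * (J k * J k) := by ring
    _ = 1 := by rw [hy2, hJ2, mul_one]
  have hterm_last : J last * y last * y (last + 1) = P := by
    have h0 : last + 1 = 0 := by
      rw [hlast]
      have : ((n - 1 : ℕ) : ZMod n) + 1 = ((n - 1 + 1 : ℕ) : ZMod n) := by push_cast; ring
      rw [this]
      have : n - 1 + 1 = n := by omega
      rw [this, ZMod.natCast_self]
    have hy0 : y (0 : ZMod n) = 1 := by simp [hy, ZMod.val_zero]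
    rw [h0, hy0, mul_one]
    have : y last = ∏ i ∈ Finset.range (n - 1), J (i : ZMod n) := by
      simp [hy, hlastval]
    rw [this, hP, aux14_prod_range n J]
    have hJlast : J last = J ((n - 1 : ℕ) : ZMod n) := by rw [hlast]
    rw [hJlast, mul_comm, ← Finset.prod_range_succ]
    have h : n - 1 + 1 = n := by omega
    rw [h]
  -- value of the candidate assignment
  have hysum : (∑ k : ZMod n, J k * y k * y (k + 1)) = (n : ℝ) - 1 + P := by
    rw [← Finset.sum_erase_add _ _ (Finset.mem_univ last), hterm_last]
    congr 1
    rw [Finset.sum_congr rfl (fun k hk => hterm_ne k (Finset.ne_of_mem_erase hk)),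
      Finset.sum_const, Finset.card_erase_of_mem (Finset.mem_univ last),
      Finset.card_univ, ZMod.card, nsmul_eq_mul, Nat.cast_sub hn]
    push_cast
    ring
  have hymem : ((n : ℝ) - 1 + P) ∈ S := ⟨y, hy1, hysum.symm⟩
  -- generic term facts for arbitrary assignments
  have hterm_pm : ∀ (x : ZMod n → ℝ), (∀ k, x k = 1 ∨ x k = -1) → ∀ k : ZMod n,
      J k * x k * x (k + 1) = 1 ∨ J k * x k * x (k + 1) = -1 := by
    intro x hx k
    rcases hJ k with h1 | h1 <;> rcases hx k with h2 | h2 <;> rcases hx (k + 1) with h3 | h3 <;>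
      simp [h1, h2, h3]
  have hub : ∀ c ∈ S, c ≤ (n : ℝ) := by
    rintro c ⟨x, hx, rfl⟩
    calc (∑ k : ZMod n, J k * x k * x (k + 1)) ≤ ∑ _k : ZMod n, (1 : ℝ) := by
          apply Finset.sum_le_sum
          intro k _
          rcases hterm_pm x hx k with h | h <;> rw [h] <;> norm_num
    _ = (n : ℝ) := by rw [Finset.sum_const, Finset.card_univ, ZMod.card]; simp
  constructor
  · intro hP1
    apply IsGreatest.csSup_eq
    constructor
    · have : (n : ℝ) - 1 + P = n := by rw [hP1]; ring
      rw [← this]; exact hymem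
    · exact hub
  · intro hPm1
    apply IsGreatest.csSup_eq
    constructor
    · have : (n : ℝ) - 1 + P = (n : ℝ) - 2 := by rw [hPm1]; ring
      rw [← this]; exact hymem
    · rintro c ⟨x, hx, rfl⟩
      -- product of the terms is -1
      have hprodt : (∏ k : ZMod n, J k * x k * x (k + 1)) = -1 := by
        have e : ∏ k : ZMod n, x (k + 1) = ∏ k : ZMod n, x k :=
          Equiv.prod_comp (Equiv.addRight (1 : ZMod n)) x
        have hx2 : (∏ k : ZMod n, x k) * (∏ k : ZMod n, x k) = 1 := by
          rw [← Finset.prod_mul_distrib]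
          rw [Finset.prod_congr rfl (fun k _ => ?_), Finset.prod_const_one]
          rcases hx k with h | h <;> rw [h] <;> ring
        calc (∏ k : ZMod n, J k * x k * x (k + 1))
            = (∏ k : ZMod n, J k) * (∏ k : ZMod n, x k) * (∏ k : ZMod n, x (k + 1)) := by
              rw [← Finset.prod_mul_distrib, ← Finset.prod_mul_distrib]
        _ = P * ((∏ k : ZMod n, x k) * (∏ k : ZMod n, x k)) := by rw [e, ← hP]; ring
        _ = -1 := by rw [hx2, hPm1, mul_one]
      -- so some term equals -1
      have hex : ∃ k0 : ZMod n, J k0 * x k0 * x (k0 + 1) = -1 := by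
        by_contra hcon
        push_neg at hcon
        have : (∏ k : ZMod n, J k * x k * x (k + 1)) = 1 := by
          rw [Finset.prod_congr rfl (fun k _ => ?_), Finset.prod_const_one]
          rcases hterm_pm x hx k with h | h
          · exact h
          · exact absurd h (hcon k)
        rw [this] at hprodt; norm_num at hprodt
      obtain ⟨k0, hk0⟩ := hex
      rw [← Finset.sum_erase_add _ _ (Finset.mem_univ k0), hk0]
      have : (∑ k ∈ Finset.univ.erase k0, J k * x k * x (k + 1)) ≤ (n : ℝ) - 1 := by
        calc (∑ k ∈ Finset.univ.erase k0, J k * x k * x (k + 1))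
            ≤ ∑ _k ∈ Finset.univ.erase k0, (1 : ℝ) := by
              apply Finset.sum_le_sum
              intro k _
              rcases hterm_pm x hx k with h | h <;> rw [h] <;> norm_num
        _ = (n : ℝ) - 1 := by
              rw [Finset.sum_const, Finset.card_erase_of_mem (Finset.mem_univ k0),
                Finset.card_univ, ZMod.card, nsmul_eq_mul, Nat.cast_sub hn]
              push_cast
              ring
      linarith
end
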